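/- Let V be a finite-dimensional vector space over a local field, and let μ be a finitely supported probability measure on GL(V) such that for every nonzero v ∈ V, for μ^⊗ℕ-almost every sequence (g₁, g₂, …), the norms ‖g_n ⋯ g₁ v‖ tend to infinity. Then the only μ-stationary probability measure on V is the Dirac mass at 0. -/

import Mathlib

open MeasureTheory Filter Topology

/-- `linComp g b n v = g (b (n-1)) (⋯ (g (b 0) v))`, i.e. `g_n ⋯ g_1 v` along the word. -/
def linComp {𝕜 V : Type*} [NontriviallyNormedField 𝕜] [NormedAddCommGroup V]
    [NormedSpace 𝕜 V] {k : ℕ} (g : Fin k → (V ≃L[𝕜] V)) (b : ℕ → Fin k) :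
    ℕ → V → V
  | 0 => id
  | (n + 1) => fun v => g (b n) (linComp g b n v)

section Aux

variable {𝕜 V : Type*} [NontriviallyNormedField 𝕜] [NormedAddCommGroup V]
    [NormedSpace 𝕜 V] {k : ℕ} (g : Fin k → (V ≃L[𝕜] V))

theorem linComp_congr {b b' : ℕ → Fin k} {n : ℕ} (h : ∀ m, m < n → b m = b' m) (v : V) :
    linComp g b n v = linComp g b' n v := by
  induction n with
  | zero => rfl
  | succ n ih =>
    simp only [linComp]
    rw [h n (Nat.lt_succ_self n), ih (fun m hm => h m (hm.trans (Nat.lt_succ_self n)))]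

theorem linComp_zero (b : ℕ → Fin k) (n : ℕ) : linComp g b n (0 : V) = 0 := by
  induction n with
  | zero => rfl
  | succ n ih => simp [linComp, ih]

theorem continuous_linComp (b : ℕ → Fin k) (n : ℕ) :
    Continuous (fun v : V => linComp g b n v) := by
  induction n with
  | zero => exact continuous_id
  | succ n ih => exact (g (b n)).continuous.comp ih

theorem measurable_apply_g [MeasurableSpace V] [BorelSpace V] :
    Measurable (fun q : Fin k × V => g q.1 q.2) := by
  have h : Measurable (fun q : V × Fin k => g q.2 q.1) :=
    measurable_from_prod_countable_left (fun i => (g i).continuous.measurable)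
  exact h.comp measurable_swap

theorem measurable_linComp [MeasurableSpace V] [BorelSpace V] (v : V) (n : ℕ) :
    Measurable fun b : ℕ → Fin k => linComp g b n v := by
  induction n with
  | zero => exact measurable_const
  | succ n ih =>
    exact (measurable_apply_g g).comp ((measurable_pi_apply n).prodMk ih)

/-- Extend a word of length `n` to an infinite word. -/
def extWord {k : ℕ} (hk : 0 < k) {n : ℕ} (w : Fin n → Fin k) : ℕ → Fin k :=
  fun m => if h : m < n then w ⟨m, h⟩ else ⟨0, hk⟩

theorem extWord_restrict {hk : 0 < k} {n : ℕ} (b : ℕ → Fin k) (m : ℕ) (hm : m < n) :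
    extWord hk (fun j : Fin n => b (j : ℕ)) m = b m := by
  unfold extWord
  rw [dif_pos hm]

theorem lintegral_cyl {k : ℕ} (p : Fin k → ENNReal) (β : Measure (ℕ → Fin k))
    (hβ : ∀ (n : ℕ) (w : Fin n → Fin k),
      β {b | ∀ j : Fin n, b (j : ℕ) = w j} = ∏ j : Fin n, p (w j))
    {n : ℕ} (h : (Fin n → Fin k) → ENNReal) :
    ∫⁻ b, h (fun j : Fin n => b (j : ℕ)) ∂β
      = ∑ w : Fin n → Fin k, (∏ j : Fin n, p (w j)) * h w := by
  have hcylmeas : ∀ w : Fin n → Fin k,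
      MeasurableSet {b : ℕ → Fin k | ∀ j : Fin n, b (j : ℕ) = w j} := by
    intro w
    have : {b : ℕ → Fin k | ∀ j : Fin n, b (j : ℕ) = w j}
        = ⋂ j : Fin n, (fun b : ℕ → Fin k => b (j : ℕ)) ⁻¹' {w j} := by
      ext b; simp [Set.mem_iInter]
    rw [this]
    exact MeasurableSet.iInter fun j => (measurable_pi_apply _) (measurableSet_singleton _)
  have key : (fun b : ℕ → Fin k => h (fun j : Fin n => b (j : ℕ)))
      = fun b => ∑ w : Fin n → Fin k,
          ({b : ℕ → Fin k | ∀ j : Fin n, b (j : ℕ) = w j}).indicator (fun _ => h w) b := by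
    funext b
    rw [Finset.sum_eq_single (fun j : Fin n => b (j : ℕ))]
    · simp [Set.indicator_apply]
    · intro w _ hw
      refine Set.indicator_of_notMem ?_ _
      intro hmem
      exact hw (funext fun j => (hmem j).symm)
    · intro habs; exact absurd (Finset.mem_univ _) habs
  rw [key, lintegral_finset_sum]
  · refine Finset.sum_congr rfl fun w _ => ?_
    rw [lintegral_indicator_const (hcylmeas w), hβ n w, mul_comm]
  · exact fun w _ => measurable_const.indicator (hcylmeas w)

theorem map_finset_sum' {α β' : Type*} [MeasurableSpace α] [MeasurableSpace β'] {ι : Type*}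
    (s : Finset ι) (μ : ι → Measure α) {f : α → β'} (hf : Measurable f) :
    (∑ i ∈ s, μ i).map f = ∑ i ∈ s, (μ i).map f := by
  classical
  induction s using Finset.induction_on with
  | empty => simp
  | insert x s hx ih =>
    rw [Finset.sum_insert hx, Finset.sum_insert hx, Measure.map_add _ _ hf, ih]

end Aux

/-- Let `V` be a finite-dimensional vector space over a local field and
`μ = ∑ p_i δ_{g i}` a finitely supported probability measure on `GL(V)` such that for
every `v ≠ 0`, for Bernoulli-almost every word, `‖g_n ⋯ g_1 v‖ → ∞`.  Then the only
`μ`-stationary probability measure on `V` is the Dirac mass at `0`. -/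
theorem stationary_measure_dirac_of_norm_growth
    {𝕜 V : Type*} [NontriviallyNormedField 𝕜] [CompleteSpace 𝕜] [LocallyCompactSpace 𝕜]
    [NormedAddCommGroup V] [NormedSpace 𝕜 V] [FiniteDimensional 𝕜 V]
    [MeasurableSpace V] [BorelSpace V]
    {k : ℕ} (g : Fin k → (V ≃L[𝕜] V))
    (p : Fin k → ENNReal) (hp : ∑ i, p i = 1) (hppos : ∀ i, 0 < p i)
    (β : Measure (ℕ → Fin k)) [IsProbabilityMeasure β]
    (hβ : ∀ (n : ℕ) (w : Fin n → Fin k),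
      β {b | ∀ j : Fin n, b (j : ℕ) = w j} = ∏ j : Fin n, p (w j))
    (hgrowth : ∀ v : V, v ≠ 0 →
      ∀ᵐ b ∂β, Tendsto (fun n : ℕ => ‖linComp g b n v‖) atTop atTop) :
    ∀ ν : Measure V, IsProbabilityMeasure ν →
      ν = ∑ i : Fin k, p i • ν.map (g i) → ν = Measure.dirac 0 := by
  intro ν hν hstat
  rcases Nat.eq_zero_or_pos k with hk0 | hk
  · subst hk0; simp at hp
  have hFmeas : ∀ (n : ℕ) (b : ℕ → Fin k), Measurable fun v : V => linComp g b n v :=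
    fun n b => (continuous_linComp g b n).measurable
  -- key composition identity
  have hsnoc : ∀ (n : ℕ) (w : Fin n → Fin k) (i : Fin k) (v : V),
      linComp g (extWord hk (Fin.snoc w i)) (n + 1) v
        = g i (linComp g (extWord hk w) n v) := by
    intro n w i v
    show g (extWord hk (Fin.snoc w i) n) (linComp g (extWord hk (Fin.snoc w i)) n v) = _
    have h1 : extWord hk (Fin.snoc w i) n = i := by
      unfold extWord
      rw [dif_pos (Nat.lt_succ_self n)]
      exact Fin.snoc_last (α := fun _ => Fin k) (x := i) (p := w)
    have h2 : linComp g (extWord hk (Fin.snoc w i)) n v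
        = linComp g (extWord hk w) n v := by
      refine linComp_congr g (fun m hm => ?_) v
      unfold extWord
      rw [dif_pos (hm.trans (Nat.lt_succ_self n)), dif_pos hm]
      exact Fin.snoc_castSucc (α := fun _ => Fin k) (x := i) (p := w) (i := ⟨m, hm⟩)
    rw [h1, h2]
  -- iterated stationarity
  have hiter : ∀ n : ℕ, ν = ∑ w : Fin n → Fin k,
      (∏ j : Fin n, p (w j)) • ν.map (fun v => linComp g (extWord hk w) n v) := by
    intro n
    induction n with
    | zero =>
      rw [Fintype.sum_unique]
      simp [linComp, Measure.map_id']
    | succ n ih =>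
      calc ν = ∑ i : Fin k, p i • ν.map (g i) := hstat
      _ = ∑ i : Fin k, ∑ w : Fin n → Fin k,
            ((∏ j : Fin n, p (w j)) * p i) •
              ((ν.map (fun v => linComp g (extWord hk w) n v)).map (g i)) := by
          refine Finset.sum_congr rfl fun i _ => ?_
          conv_lhs => rw [ih]
          rw [map_finset_sum' _ _ ((g i).continuous.measurable), Finset.smul_sum]
          refine Finset.sum_congr rfl fun w _ => ?_
          rw [Measure.map_smul, smul_smul, mul_comm]
      _ = ∑ w : Fin (n + 1) → Fin k,
            (∏ j : Fin (n + 1), p (w j)) •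
              ν.map (fun v => linComp g (extWord hk w) (n + 1) v) := by
          rw [← Equiv.sum_comp (Fin.snocEquiv (fun _ : Fin (n + 1) => Fin k))
            (fun w => (∏ j : Fin (n + 1), p (w j)) •
              ν.map (fun v => linComp g (extWord hk w) (n + 1) v)),
            Fintype.sum_prod_type]
          refine Finset.sum_congr rfl fun i _ => Finset.sum_congr rfl fun w _ => ?_
          have h1 : (Fin.snocEquiv (fun _ : Fin (n + 1) => Fin k)) (i, w) = Fin.snoc w i := rfl
          rw [h1]
          have h2 : (fun v => linComp g (extWord hk (Fin.snoc w i)) (n + 1) v)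
              = (g i) ∘ (fun v => linComp g (extWord hk w) n v) :=
            funext fun v => hsnoc n w i v
          rw [h2, ← Measure.map_map ((g i).continuous.measurable) (hFmeas n _)]
          congr 1
          rw [Fin.prod_univ_castSucc]
          simp
  -- main estimate: ν (closedBall 0 m) = ν {0}
  have hkey : ∀ m : ℕ, ν (Metric.closedBall (0 : V) m) = ν {0} := by
    intro m
    set A : Set V := Metric.closedBall (0 : V) m with hA
    have hAmeas : MeasurableSet A := Metric.isClosed_closedBall.measurableSet
    set φ : ℕ → V → ENNReal := fun n v => β {b | linComp g b n v ∈ A} with hφ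
    have hSmeas : ∀ (n : ℕ) (v : V),
        MeasurableSet {b : ℕ → Fin k | linComp g b n v ∈ A} :=
      fun n v => (measurable_linComp g v n) hAmeas
    have hφ_sum : ∀ n v, φ n v = ∑ w : Fin n → Fin k, (∏ j : Fin n, p (w j)) *
        A.indicator (fun _ => (1 : ENNReal)) (linComp g (extWord hk w) n v) := by
      intro n v
      have h1 : φ n v = ∫⁻ b, A.indicator (fun _ => (1 : ENNReal))
          (linComp g (extWord hk (fun j : Fin n => b (j : ℕ))) n v) ∂β := by
        rw [show φ n v = β {b | linComp g b n v ∈ A} from rfl,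
          ← lintegral_indicator_one (hSmeas n v)]
        refine lintegral_congr fun b => ?_
        rw [linComp_congr g (fun m hm => extWord_restrict b m hm) v]
        by_cases hmem : linComp g b n v ∈ A
        · rw [Set.indicator_of_mem (show b ∈ {b' | linComp g b' n v ∈ A} from hmem),
            Set.indicator_of_mem hmem]
          rfl
        · rw [Set.indicator_of_notMem (show b ∉ {b' | linComp g b' n v ∈ A} from hmem),
            Set.indicator_of_notMem hmem]
      rw [h1]
      exact lintegral_cyl p β hβ
        (fun w => A.indicator (fun _ => (1 : ENNReal)) (linComp g (extWord hk w) n v))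
    have hconst : ∀ n, ∫⁻ v, φ n v ∂ν = ν A := by
      intro n
      have hνA : ν A = ∑ w : Fin n → Fin k, (∏ j : Fin n, p (w j)) *
          ν ((fun v => linComp g (extWord hk w) n v) ⁻¹' A) := by
        conv_lhs => rw [hiter n]
        rw [Measure.finset_sum_apply]
        refine Finset.sum_congr rfl fun w _ => ?_
        rw [Measure.smul_apply, Measure.map_apply (hFmeas n _) hAmeas, smul_eq_mul]
      rw [hνA, lintegral_congr (hφ_sum n), lintegral_finset_sum]
      · refine Finset.sum_congr rfl fun w _ => ?_
        have hmf : Measurable fun v : V => A.indicator (fun _ => (1 : ENNReal))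
            (linComp g (extWord hk w) n v) :=
          (measurable_const.indicator hAmeas).comp (hFmeas n _)
        rw [lintegral_const_mul _ hmf]
        congr 1
        have : (fun v => A.indicator (fun _ => (1 : ENNReal))
            (linComp g (extWord hk w) n v))
            = ((fun v => linComp g (extWord hk w) n v) ⁻¹' A).indicator
                (fun _ => (1 : ENNReal)) := by
          funext v
          by_cases hmem : linComp g (extWord hk w) n v ∈ A
          · rw [Set.indicator_of_mem hmem,
              Set.indicator_of_mem
                (show v ∈ (fun v => linComp g (extWord hk w) n v) ⁻¹' A from hmem)]
          · rw [Set.indicator_of_notMem hmem,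
              Set.indicator_of_notMem
                (show v ∉ (fun v => linComp g (extWord hk w) n v) ⁻¹' A from hmem)]
        rw [this]
        exact lintegral_indicator_one ((hFmeas n _) hAmeas)
      · exact fun w _ =>
          (((measurable_const.indicator hAmeas).comp (hFmeas n _)).const_mul _)
    have hφmeas : ∀ n, Measurable (φ n) := by
      intro n
      have : φ n = fun v => ∑ w : Fin n → Fin k, (∏ j : Fin n, p (w j)) *
          A.indicator (fun _ => (1 : ENNReal)) (linComp g (extWord hk w) n v) :=
        funext (hφ_sum n)
      rw [this]
      exact Finset.measurable_sum _ fun w _ =>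
        ((measurable_const.indicator hAmeas).comp (hFmeas n _)).const_mul _
    have hbound : ∀ n, φ n ≤ᵐ[ν] fun _ => (1 : ENNReal) := by
      intro n
      refine Filter.Eventually.of_forall fun v => ?_
      calc φ n v ≤ β Set.univ := measure_mono (Set.subset_univ _)
      _ = 1 := measure_univ
    have hptlim : ∀ᵐ v ∂ν, Tendsto (fun n => φ n v) atTop
        (𝓝 (({0} : Set V).indicator (fun _ => (1 : ENNReal)) v)) := by
      refine Filter.Eventually.of_forall fun v => ?_
      by_cases hv : v = 0
      · subst hv
        have h1 : ∀ n, φ n (0 : V) = 1 := by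
          intro n
          have : {b : ℕ → Fin k | linComp g b n (0 : V) ∈ A} = Set.univ := by
            ext b
            simp [linComp_zero g b n, hA, Metric.mem_closedBall]
          rw [show φ n (0 : V) = β {b | linComp g b n (0 : V) ∈ A} from rfl, this,
            measure_univ]
        have h2 : ({0} : Set V).indicator (fun _ => (1 : ENNReal)) 0 = 1 :=
          Set.indicator_of_mem (Set.mem_singleton 0) _
        rw [h2]
        simp only [h1]
        exact tendsto_const_nhds
      · have hind : ({0} : Set V).indicator (fun _ => (1 : ENNReal)) v = 0 :=
          Set.indicator_of_notMem (by simpa using hv) _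
        rw [hind]
        have hDCT : Tendsto (fun n => ∫⁻ b,
            ({b : ℕ → Fin k | linComp g b n v ∈ A}).indicator
              (fun _ => (1 : ENNReal)) b ∂β) atTop
            (𝓝 (∫⁻ _ : ℕ → Fin k, (0 : ENNReal) ∂β)) := by
          refine tendsto_lintegral_of_dominated_convergence (fun _ => (1 : ENNReal))
            (fun n => measurable_const.indicator (hSmeas n v))
            (fun n => Filter.Eventually.of_forall fun b => ?_) (by simp) ?_
          · classical
            rw [Set.indicator_apply]
            split <;> simp
          · filter_upwards [hgrowth v hv] with b hb
            have hev : ∀ᶠ n in atTop,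
                ({b' : ℕ → Fin k | linComp g b' n v ∈ A}).indicator
                  (fun _ => (1 : ENNReal)) b = 0 := by
              filter_upwards [hb.eventually_gt_atTop (m : ℝ)] with n hn
              refine Set.indicator_of_notMem ?_ _
              simp only [Set.mem_setOf_eq, hA, Metric.mem_closedBall, dist_zero_right]
              exact not_le.mpr hn
            exact Tendsto.congr' (hev.mono fun n h => h.symm) tendsto_const_nhds
        rw [lintegral_zero] at hDCT
        exact hDCT.congr fun n => lintegral_indicator_one (hSmeas n v)
    have hlim : Tendsto (fun n => ∫⁻ v, φ n v ∂ν) atTop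
        (𝓝 (∫⁻ v, ({0} : Set V).indicator (fun _ => (1 : ENNReal)) v ∂ν)) :=
      tendsto_lintegral_of_dominated_convergence _ hφmeas hbound (by simp) hptlim
    have h10 : (∫⁻ v, ({0} : Set V).indicator (fun _ => (1 : ENNReal)) v ∂ν) = ν {0} :=
      lintegral_indicator_one (measurableSet_singleton (0 : V))
    rw [h10] at hlim
    exact tendsto_nhds_unique tendsto_const_nhds (hlim.congr hconst)
  -- pass to the limit in m
  have hUnion : (⋃ m : ℕ, Metric.closedBall (0 : V) m) = Set.univ := by
    ext v
    simp only [Set.mem_iUnion, Set.mem_univ, iff_true, Metric.mem_closedBall,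
      dist_zero_right]
    exact exists_nat_ge ‖v‖
  have hmono : Monotone fun m : ℕ => Metric.closedBall (0 : V) m := fun a b hab =>
    Metric.closedBall_subset_closedBall (by exact_mod_cast hab)
  have h1 : Tendsto (fun m : ℕ => ν (Metric.closedBall (0 : V) m)) atTop
      (𝓝 (ν (⋃ m : ℕ, Metric.closedBall (0 : V) m))) :=
    tendsto_measure_iUnion_atTop hmono
  rw [hUnion, measure_univ] at h1
  rw [funext hkey] at h1
  have hν0 : ν {(0 : V)} = 1 := tendsto_nhds_unique tendsto_const_nhds h1
  -- conclude
  refine Measure.ext fun s hs => ?_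
  rw [Measure.dirac_apply' _ hs]
  by_cases h0s : (0 : V) ∈ s
  · rw [Set.indicator_of_mem h0s]
    refine le_antisymm prob_le_one ?_
    calc (1 : ENNReal) = ν {0} := hν0.symm
    _ ≤ ν s := measure_mono (Set.singleton_subset_iff.mpr h0s)
  · rw [Set.indicator_of_notMem h0s]
    have hcompl : ν ({(0 : V)}ᶜ) = 0 := by
      rw [measure_compl (measurableSet_singleton 0) (measure_ne_top ν _), hν0,
        measure_univ, tsub_self]
    refine measure_mono_null (fun x hx => ?_) hcompl
    simp only [Set.mem_compl_iff, Set.mem_singleton_iff]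
    rintro rfl
    exact h0s hx
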